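/- Let α be the matrix with rows (x₀, x₀), (x₁, 0), (0, x₂) over R = k[x₀,x₁,x₂], and let d = (x₁x₂, −x₀x₂, −x₀x₁) be the vector of its signed maximal minors. Then every syzygy of d, i.e., every triple (p₀,p₁,p₂) ∈ R³ with p₀x₁x₂ − p₁x₀x₂ − p₂x₀x₁ = 0, is an R-linear combination of the two columns of α, namely of (x₀, x₁, 0) and (x₀, 0, x₂). -/

import Mathlib

open MvPolynomial

lemma primeX_aux (k : Type*) [Field k] (i : Fin 3) :
    Prime (X i : MvPolynomial (Fin 3) k) := by
  rw [← MulEquiv.prime_iff ((renameEquiv k (Equiv.swap i 0)).trans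
    (finSuccEquiv k 2)).toRingEquiv.toMulEquiv]
  simp only [RingEquiv.toMulEquiv_eq_coe, RingEquiv.coe_toMulEquiv,
    AlgEquiv.toRingEquiv_eq_coe, AlgEquiv.coe_ringEquiv, AlgEquiv.trans_apply, renameEquiv_apply, rename_X,
    Equiv.swap_apply_left, finSuccEquiv_X_zero]
  exact Polynomial.prime_X (R := MvPolynomial (Fin 2) k)

theorem syzygies_generated_by_columns (k : Type*) [Field k]
    (p : Fin 3 → MvPolynomial (Fin 3) k)
    (h : p 0 * (X 1 * X 2) - p 1 * (X 0 * X 2) - p 2 * (X 0 * X 1) = 0) :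
    ∃ a b : MvPolynomial (Fin 3) k,
      p 0 = a * X 0 + b * X 0 ∧ p 1 = a * X 1 ∧ p 2 = b * X 2 := by
  have hp0 : Prime (X 0 : MvPolynomial (Fin 3) k) := primeX_aux k 0
  have hp1 : Prime (X 1 : MvPolynomial (Fin 3) k) := primeX_aux k 1
  have hp2 : Prime (X 2 : MvPolynomial (Fin 3) k) := primeX_aux k 2
  have hd0 : (X 0 : MvPolynomial (Fin 3) k) ∣ p 0 * (X 1 * X 2) :=
    ⟨p 1 * X 2 + p 2 * X 1, by linear_combination h⟩
  have hd0' : (X 0 : MvPolynomial (Fin 3) k) ∣ p 0 := by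
    rcases hp0.dvd_mul.mp hd0 with h' | h'
    · exact h'
    rcases hp0.dvd_mul.mp h' with h'' | h'' <;> simp [X_dvd_X] at h''
  obtain ⟨q, hq⟩ := hd0'
  have h1 : q * X 1 * X 2 = p 1 * X 2 + p 2 * X 1 := by
    have := mul_left_cancel₀ (X_ne_zero (R := k) (σ := Fin 3) 0)
      (show (X 0 : MvPolynomial (Fin 3) k) * (q * X 1 * X 2) =
        X 0 * (p 1 * X 2 + p 2 * X 1) by rw [hq] at h; linear_combination h)
    exact this
  have hd1 : (X 1 : MvPolynomial (Fin 3) k) ∣ p 1 * X 2 :=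
    ⟨q * X 2 - p 2, by linear_combination -h1⟩
  have hd1' : (X 1 : MvPolynomial (Fin 3) k) ∣ p 1 := by
    rcases hp1.dvd_mul.mp hd1 with h' | h'
    · exact h'
    · simp [X_dvd_X] at h'
  obtain ⟨a, ha⟩ := hd1'
  have h2 : p 2 = (q - a) * X 2 := by
    have := mul_left_cancel₀ (X_ne_zero (R := k) (σ := Fin 3) 1)
      (show (X 1 : MvPolynomial (Fin 3) k) * (p 2) =
        X 1 * ((q - a) * X 2) by rw [ha] at h1; linear_combination -h1)
    exact this
  exact ⟨a, q - a, by rw [hq]; ring, by rw [ha]; ring, h2⟩
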